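/- Under hypothesis (gev) with eigenvalue μ = ρω (ρ ≥ 0, |ω| = 1) and height ν, let S_K be the running sum associated with C = V^(ν−1), and assume hypothesis (jsr_λ). If ρ < λ then sup_{x∈[0,1]} ‖S_K(x)‖ = O(λ^K) as K → ∞; if ρ = λ then sup_{x∈[0,1]} ‖S_K(x)‖ = O(K^ν λ^K) as K → ∞. -/

import Mathlib

open scoped Classical BigOperators
open Filter Asymptotics

attribute [local instance] Matrix.linftyOpNormedAddCommGroup Matrix.linftyOpNormedRing

noncomputable section

/-- `A_w = A_{w_1} ⋯ A_{w_K}` for a word `w` of length `K` over the digit alphabet. -/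
def wordProd {B d : ℕ} (A : Fin B → Matrix (Fin d) (Fin d) ℂ) {K : ℕ}
    (w : Fin K → Fin B) : Matrix (Fin d) (Fin d) ℂ :=
  ((List.ofFn w).map A).prod

/-- `(0.w)_B = Σ_{k=1}^K w_k B^{-k}`. -/
def wordVal {B K : ℕ} (w : Fin K → Fin B) : ℝ :=
  ∑ k : Fin K, (w k : ℝ) / (B : ℝ) ^ ((k : ℕ) + 1)

/-- The running sum `S_K(x) = Σ_{|w|=K, (0.w)_B ≤ x} A_w C`. -/
def runSum {B d : ℕ} (A : Fin B → Matrix (Fin d) (Fin d) ℂ) (C : Fin d → ℂ)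
    (K : ℕ) (x : ℝ) : Fin d → ℂ :=
  ∑ w : Fin K → Fin B, if wordVal w ≤ x then (wordProd A w).mulVec C else 0

/-- The basic dilation equation for data `ρ, ω, V`. -/
def DilationEq {B d : ℕ} (A : Fin B → Matrix (Fin d) (Fin d) ℂ) (ρ : ℝ) (ω : ℂ)
    (V : Fin d → ℂ) (Φ : ℝ → Fin d → ℂ) : Prop :=
  Φ 0 = 0 ∧ Φ 1 = V ∧
    ∀ r : Fin B, ∀ x : ℝ, (r : ℝ) / B ≤ x → x < ((r : ℝ) + 1) / B →
      Φ x = ((ρ : ℂ) * ω)⁻¹ •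
        ((∑ s ∈ Finset.univ.filter fun s : Fin B => s < r, (A s).mulVec V) +
          (A r).mulVec (Φ (B * x - r)))

section aux
variable {B d : ℕ} (A : Fin B → Matrix (Fin d) (Fin d) ℂ)

lemma wordProd_nil (w : Fin 0 → Fin B) : wordProd A w = 1 := by
  simp [wordProd]

lemma wordProd_cons {K : ℕ} (r : Fin B) (w : Fin K → Fin B) :
    wordProd A (Fin.cons r w) = A r * wordProd A w := by
  simp [wordProd, List.ofFn_succ]

lemma wordProd_snoc {K : ℕ} (w : Fin (K + 1) → Fin B) :
    wordProd A w = wordProd A (fun i : Fin K => w i.castSucc) * A (w (Fin.last K)) := by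
  rw [wordProd, List.ofFn_succ', List.concat_eq_append, List.map_append, List.prod_append]
  simp [wordProd]

lemma wordVal_cons {K : ℕ} (r : Fin B) (w : Fin K → Fin B) (hB : 0 < B) :
    wordVal (Fin.cons r w) = (r : ℝ) / B + wordVal w / B := by
  have hBne : (B : ℝ) ≠ 0 := by positivity
  have h2 : wordVal w / (B:ℝ) = ∑ k : Fin K, (w k : ℝ) / (B : ℝ) ^ ((k:ℕ) + 2) := by
    rw [wordVal, Finset.sum_div]
    exact Finset.sum_congr rfl fun k _ => by rw [div_div, ← pow_succ]
  rw [wordVal, Fin.sum_univ_succ, h2]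
  simp [Fin.cons_zero, Fin.cons_succ, Fin.val_succ]

lemma wordVal_nonneg {B K : ℕ} (w : Fin K → Fin B) : 0 ≤ wordVal w := by
  refine Finset.sum_nonneg fun k _ => by positivity

lemma wordVal_lt_one {B : ℕ} (hB : 0 < B) : ∀ {K : ℕ} (w : Fin K → Fin B), wordVal w < 1 := by
  intro K
  induction K with
  | zero => intro w; simp [wordVal]
  | succ K ih =>
    intro w
    have h := ih (Fin.tail w)
    have h0 : ((w 0 : ℕ) : ℝ) + 1 ≤ (B : ℝ) := by
      have : (w 0 : ℕ) + 1 ≤ B := (w 0).2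
      exact_mod_cast this
    have hBpos : (0:ℝ) < B := by positivity
    have := wordVal_cons (w 0) (Fin.tail w) hB
    rw [Fin.cons_self_tail] at this
    rw [this]
    rw [← add_div, div_lt_one hBpos]
    linarith

lemma sum_wordProd : ∀ (K : ℕ), ∑ w : Fin K → Fin B, wordProd A w = (∑ r, A r) ^ K := by
  intro K
  induction K with
  | zero => simp [wordProd]
  | succ K ih =>
    rw [← Equiv.sum_comp (Fin.consEquiv fun _ : Fin (K+1) => Fin B), Fintype.sum_prod_type]
    have hc : ∀ (r : Fin B) (w' : Fin K → Fin B),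
        wordProd A ((Fin.consEquiv fun _ : Fin (K+1) => Fin B) (r, w')) = A r * wordProd A w' :=
      fun r w' => wordProd_cons A r w'
    simp_rw [hc, ← Finset.mul_sum, ih, ← Finset.sum_mul, pow_succ']

end aux

section split
variable {B d : ℕ} (A : Fin B → Matrix (Fin d) (Fin d) ℂ) (C : Fin d → ℂ)

/-- `M ↦ M.mulVec C` as an `AddMonoidHom`. -/
def mulVecHom : Matrix (Fin d) (Fin d) ℂ →+ (Fin d → ℂ) where
  toFun M := M.mulVec C
  map_zero' := Matrix.zero_mulVec C
  map_add' M N := Matrix.add_mulVec M N C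

@[simp] lemma mulVecHom_apply (M : Matrix (Fin d) (Fin d) ℂ) :
    mulVecHom C M = M.mulVec C := rfl

lemma mulVec_sum' (M : Matrix (Fin d) (Fin d) ℂ) {ι : Type*} (s : Finset ι)
    (f : ι → (Fin d → ℂ)) : M.mulVec (∑ i ∈ s, f i) = ∑ i ∈ s, M.mulVec (f i) := by
  exact map_sum (Matrix.mulVecLin M) f s

lemma sum_mulVec' {ι : Type*} (s : Finset ι) (f : ι → Matrix (Fin d) (Fin d) ℂ) :
    (∑ i ∈ s, f i).mulVec C = ∑ i ∈ s, (f i).mulVec C := by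
  exact map_sum (mulVecHom C) f s

lemma runSum_succ (hB : 0 < B) (K : ℕ) (x : ℝ)
    (r₀ : Fin B) (hr₀l : (r₀ : ℝ) ≤ B * x) (hr₀u : B * x < (r₀ : ℝ) + 1) :
    runSum A C (K + 1) x =
      (∑ r ∈ Finset.univ.filter (fun r : Fin B => r < r₀), A r).mulVec
          (((∑ r, A r) ^ K).mulVec C)
        + (A r₀).mulVec (runSum A C K (B * x - r₀)) := by
  classical
  have hBpos : (0:ℝ) < B := by exact_mod_cast hB
  have hcond : ∀ (r : Fin B) (w' : Fin K → Fin B),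
      (wordVal (Fin.cons r w') ≤ x ↔ (r : ℝ) + wordVal w' ≤ B * x) := by
    intro r w'
    rw [wordVal_cons r w' hB, ← add_div, div_le_iff₀ hBpos, mul_comm]
  have key : ∀ r : Fin B,
      (∑ w' : Fin K → Fin B,
          if wordVal (Fin.cons r w') ≤ x then (wordProd A (Fin.cons r w')).mulVec C else 0)
        = if r < r₀ then (A r).mulVec (((∑ s, A s) ^ K).mulVec C)
          else if r = r₀ then (A r₀).mulVec (runSum A C K (B * x - r₀)) else 0 := by
    intro r
    rcases lt_trichotomy r r₀ with h | h | h
    · rw [if_pos h]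
      have htrue : ∀ w' : Fin K → Fin B, wordVal (Fin.cons r w') ≤ x := by
        intro w'
        rw [hcond]
        have h1 : wordVal w' < 1 := wordVal_lt_one hB w'
        have h2 : (r : ℝ) + 1 ≤ (r₀ : ℝ) := by
          have : (r : ℕ) + 1 ≤ (r₀ : ℕ) := h
          exact_mod_cast this
        linarith
      calc (∑ w' : Fin K → Fin B,
            if wordVal (Fin.cons r w') ≤ x then (wordProd A (Fin.cons r w')).mulVec C else 0)
          = ∑ w' : Fin K → Fin B, (A r).mulVec ((wordProd A w').mulVec C) := by
            refine Finset.sum_congr rfl fun w' _ => ?_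
            rw [if_pos (htrue w'), wordProd_cons, ← Matrix.mulVec_mulVec]
        _ = (A r).mulVec (((∑ s, A s) ^ K).mulVec C) := by
            rw [← mulVec_sum', ← sum_mulVec', sum_wordProd]
    · subst h
      rw [if_neg (lt_irrefl r), if_pos rfl]
      calc (∑ w' : Fin K → Fin B,
            if wordVal (Fin.cons r w') ≤ x then (wordProd A (Fin.cons r w')).mulVec C else 0)
          = ∑ w' : Fin K → Fin B,
              (A r).mulVec (if wordVal w' ≤ B * x - r then (wordProd A w').mulVec C else 0) := by
            refine Finset.sum_congr rfl fun w' _ => ?_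
            have : (wordVal (Fin.cons r w') ≤ x) ↔ (wordVal w' ≤ B * x - r) := by
              rw [hcond]; constructor <;> intro hh <;> linarith
            rw [apply_ite (Matrix.mulVec (A r)), Matrix.mulVec_zero]
            by_cases hc : wordVal w' ≤ B * x - (r:ℝ)
            · rw [if_pos hc, if_pos (this.2 hc), wordProd_cons, ← Matrix.mulVec_mulVec]
            · rw [if_neg hc, if_neg (fun hcc => hc (this.1 hcc))]
        _ = (A r).mulVec (runSum A C K (B * x - r)) := by
            rw [← mulVec_sum']
            rfl
    · rw [if_neg (not_lt.2 h.le), if_neg h.ne']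
      refine Finset.sum_eq_zero fun w' _ => ?_
      rw [if_neg]
      rw [hcond]
      have h1 : (0:ℝ) ≤ wordVal w' := wordVal_nonneg w'
      have h2 : (r₀ : ℝ) + 1 ≤ (r : ℝ) := by
        have : (r₀ : ℕ) + 1 ≤ (r : ℕ) := h
        exact_mod_cast this
      intro hcc
      linarith
  calc runSum A C (K+1) x
      = ∑ r : Fin B, ∑ w' : Fin K → Fin B,
          (if wordVal (Fin.cons r w') ≤ x then (wordProd A (Fin.cons r w')).mulVec C else 0) := by
        rw [runSum, ← Equiv.sum_comp (Fin.consEquiv fun _ : Fin (K+1) => Fin B),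
          Fintype.sum_prod_type]
        rfl
    _ = ∑ r : Fin B, (if r < r₀ then (A r).mulVec (((∑ s, A s) ^ K).mulVec C)
          else if r = r₀ then (A r₀).mulVec (runSum A C K (B * x - r₀)) else 0) :=
        Finset.sum_congr rfl fun r _ => key r
    _ = _ := by
        rw [Finset.sum_ite, Finset.sum_ite_eq' _ r₀]
        simp only [Finset.mem_filter, Finset.mem_univ, true_and, not_lt]
        rw [if_pos (le_refl r₀), sum_mulVec']

end split

attribute [local instance] Matrix.linfty_opNormOneClass

section jsr
variable {B d : ℕ} (A : Fin B → Matrix (Fin d) (Fin d) ℂ)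

lemma wordProd_append {m n : ℕ} (w : Fin (m + n) → Fin B) :
    wordProd A w = wordProd A (fun i : Fin m => w (Fin.castAdd n i)) *
      wordProd A (fun i : Fin n => w (Fin.natAdd m i)) := by
  rw [wordProd, List.ofFn_add, List.map_append, List.prod_append]
  rfl

lemma wordProd_snoc' {K : ℕ} (p : Fin K → Fin B) (r : Fin B) :
    wordProd A (Fin.snoc p r) = wordProd A p * A r := by
  rw [wordProd_snoc]
  simp

lemma wordProd_norm_le (hd : 1 ≤ d) (M₀ : ℝ) (hM₀ : 1 ≤ M₀)
    (hA : ∀ r, ‖A r‖ ≤ M₀) : ∀ {K : ℕ} (w : Fin K → Fin B), ‖wordProd A w‖ ≤ M₀ ^ K := by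
  haveI : Nonempty (Fin d) := Fin.pos_iff_nonempty.mp (by omega)
  intro K
  induction K with
  | zero => intro w; rw [wordProd_nil, pow_zero, norm_one]
  | succ K ih =>
    intro w
    rw [← Fin.cons_self_tail w, wordProd_cons, pow_succ']
    calc ‖A (w 0) * wordProd A (Fin.tail w)‖ ≤ ‖A (w 0)‖ * ‖wordProd A (Fin.tail w)‖ :=
          norm_mul_le _ _
      _ ≤ M₀ * M₀ ^ K := by
          apply mul_le_mul (hA _) (ih _) (norm_nonneg _) (by linarith)

lemma jsr_all (hd : 1 ≤ d) (lam : ℝ) (hlam : 0 < lam) (T : ℕ) (hT : 1 ≤ T)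
    (hjsr : ∀ w : Fin T → Fin B, ‖wordProd A w‖ ≤ lam ^ T) :
    ∃ c₁ : ℝ, 1 ≤ c₁ ∧ ∀ (K : ℕ) (w : Fin K → Fin B), ‖wordProd A w‖ ≤ c₁ * lam ^ K := by
  set M₀ : ℝ := 1 + ∑ r, ‖A r‖ with hM₀def
  have hM₀ : 1 ≤ M₀ := by
    have : (0:ℝ) ≤ ∑ r, ‖A r‖ := Finset.sum_nonneg fun r _ => norm_nonneg _
    simp [hM₀def]; linarith
  have hA : ∀ r, ‖A r‖ ≤ M₀ := by
    intro r
    have h1 : ‖A r‖ ≤ ∑ s, ‖A s‖ :=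
      Finset.single_le_sum (fun s _ => norm_nonneg (A s)) (Finset.mem_univ r)
    simp only [hM₀def]; linarith
  have hbase : (1:ℝ) ≤ M₀ / lam + 1 := by
    have := div_nonneg (by linarith : (0:ℝ) ≤ M₀) hlam.le
    linarith
  refine ⟨(M₀ / lam + 1) ^ T, one_le_pow₀ hbase, ?_⟩
  set c₁ : ℝ := (M₀ / lam + 1) ^ T with hc₁def
  have hc₁ : 1 ≤ c₁ := one_le_pow₀ hbase
  intro K
  induction K using Nat.strong_induction_on with
  | _ K ih =>
    intro w
    by_cases hK : K < T
    · calc ‖wordProd A w‖ ≤ M₀ ^ K := wordProd_norm_le A hd M₀ hM₀ hA w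
        _ = (M₀ / lam) ^ K * lam ^ K := by
            rw [← mul_pow, div_mul_cancel₀]; positivity
        _ ≤ c₁ * lam ^ K := by
            apply mul_le_mul_of_nonneg_right _ (by positivity)
            calc (M₀ / lam) ^ K ≤ (M₀ / lam + 1) ^ K :=
                  pow_le_pow_left₀ (by positivity) (by linarith) K
              _ ≤ c₁ := pow_le_pow_right₀ hbase hK.le
    · obtain ⟨n, rfl⟩ : ∃ n, K = T + n := ⟨K - T, by omega⟩
      rw [wordProd_append]
      calc ‖wordProd A (fun i : Fin T => w (Fin.castAdd n i)) *
              wordProd A (fun i : Fin n => w (Fin.natAdd T i))‖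
          ≤ ‖wordProd A (fun i : Fin T => w (Fin.castAdd n i))‖ *
              ‖wordProd A (fun i : Fin n => w (Fin.natAdd T i))‖ := norm_mul_le _ _
        _ ≤ lam ^ T * (c₁ * lam ^ n) := by
            apply mul_le_mul (hjsr _) (ih n (by omega) _) (norm_nonneg _) (by positivity)
        _ = c₁ * lam ^ (T + n) := by rw [pow_add]; ring
end jsr

section mainbound
variable {B d : ℕ} (A : Fin B → Matrix (Fin d) (Fin d) ℂ) (Cv : Fin d → ℂ)

lemma runSum_zero (x : ℝ) (hx : 0 ≤ x) : runSum A Cv 0 x = Cv := by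
  rw [runSum]
  rw [Finset.sum_eq_single_of_mem (fun i : Fin 0 => i.elim0) (Finset.mem_univ _)]
  · rw [if_pos]
    · rw [wordProd_nil, Matrix.one_mulVec]
    · rw [wordVal]; simpa using hx
  · intro w _ hw
    exact absurd (funext fun i => i.elim0) hw

lemma runSum_one (hB : 0 < B) (K : ℕ) : runSum A Cv K 1 = ((∑ r, A r) ^ K).mulVec Cv := by
  rw [runSum, ← sum_wordProd, sum_mulVec']
  refine Finset.sum_congr rfl fun w _ => if_pos (wordVal_lt_one hB w).le

lemma runSum_le_bound (hB : 0 < B) (hd : 1 ≤ d)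
    (lam c₁ M : ℝ) (g : ℕ → ℝ) (hlam : 0 < lam) (hc₁pos : 1 ≤ c₁) (hM : 0 ≤ M)
    (hc₁ : ∀ (K : ℕ) (w : Fin K → Fin B), ‖wordProd A w‖ ≤ c₁ * lam ^ K)
    (hMs : ∀ s : Finset (Fin B), ‖∑ r ∈ s, A r‖ ≤ M)
    (hg : ∀ m, ‖((∑ r, A r) ^ m).mulVec Cv‖ ≤ g m)
    (hgn : ∀ m, 0 ≤ g m) :
    ∀ (K n : ℕ) (p : Fin n → Fin B) (x : ℝ), 0 ≤ x → x < 1 →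
      ‖(wordProd A p).mulVec (runSum A Cv K x)‖ ≤
        c₁ * lam ^ (n + K) * ‖Cv‖ +
          M * c₁ * ∑ k ∈ Finset.range K, lam ^ (n + k) * g (K - 1 - k) := by
  intro K
  induction K with
  | zero =>
    intro n p x hx0 _
    rw [runSum_zero A Cv x hx0]
    simp only [Finset.range_zero, Finset.sum_empty, mul_zero, add_zero, Nat.add_zero]
    calc ‖(wordProd A p).mulVec Cv‖ ≤ ‖wordProd A p‖ * ‖Cv‖ :=
          Matrix.linfty_opNorm_mulVec _ _
      _ ≤ c₁ * lam ^ n * ‖Cv‖ :=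
          mul_le_mul_of_nonneg_right (hc₁ n p) (norm_nonneg _)
  | succ K ih =>
    intro n p x hx0 hx1
    have hBpos : (0:ℝ) < B := by exact_mod_cast hB
    have hBx0 : (0:ℝ) ≤ B * x := by positivity
    have hfl0 : 0 ≤ ⌊(B:ℝ) * x⌋ := Int.floor_nonneg.2 hBx0
    have hflB : ⌊(B:ℝ) * x⌋ < B := by
      have : (B:ℝ) * x < B := by nlinarith
      have h2 : ((⌊(B:ℝ) * x⌋ : ℝ)) < (B:ℝ) := lt_of_le_of_lt (Int.floor_le _) this
      exact_mod_cast h2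
    set r₀ : Fin B := ⟨⌊(B:ℝ) * x⌋.toNat, by omega⟩ with hr₀def
    have hr₀cast : ((r₀ : ℕ) : ℝ) = (⌊(B:ℝ) * x⌋ : ℝ) := by
      simp only [hr₀def]
      exact_mod_cast Int.toNat_of_nonneg hfl0
    have hr₀l : ((r₀ : ℕ) : ℝ) ≤ B * x := by rw [hr₀cast]; exact Int.floor_le _
    have hr₀u : (B:ℝ) * x < ((r₀ : ℕ) : ℝ) + 1 := by
      rw [hr₀cast]; exact Int.lt_floor_add_one _
    have hy0 : 0 ≤ (B:ℝ) * x - (r₀ : ℕ) := by linarith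
    have hy1 : (B:ℝ) * x - (r₀ : ℕ) < 1 := by linarith
    rw [runSum_succ A Cv hB K x r₀ hr₀l hr₀u, Matrix.mulVec_add]
    set F := ∑ r ∈ Finset.univ.filter (fun r : Fin B => r < r₀), A r with hFdef
    set QK := ((∑ r, A r) ^ K).mulVec Cv with hQKdef
    have hterm1 : ‖(wordProd A p).mulVec (F.mulVec QK)‖ ≤ c₁ * lam ^ n * (M * g K) := by
      calc ‖(wordProd A p).mulVec (F.mulVec QK)‖
          ≤ ‖wordProd A p‖ * ‖F.mulVec QK‖ := Matrix.linfty_opNorm_mulVec _ _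
        _ ≤ ‖wordProd A p‖ * (‖F‖ * ‖QK‖) := by
            apply mul_le_mul_of_nonneg_left (Matrix.linfty_opNorm_mulVec _ _) (norm_nonneg _)
        _ ≤ (c₁ * lam ^ n) * (M * g K) := by
            apply mul_le_mul (hc₁ n p)
            · exact mul_le_mul (hMs _) (hg K) (norm_nonneg _) hM
            · positivity
            · positivity
    have hterm2 : ‖(wordProd A p).mulVec ((A r₀).mulVec (runSum A Cv K ((B:ℝ) * x - (r₀:ℕ))))‖ ≤
        c₁ * lam ^ ((n+1) + K) * ‖Cv‖ +
          M * c₁ * ∑ k ∈ Finset.range K, lam ^ ((n+1) + k) * g (K - 1 - k) := by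
      rw [Matrix.mulVec_mulVec, ← wordProd_snoc']
      exact ih (n+1) (Fin.snoc p r₀) _ hy0 hy1
    calc ‖(wordProd A p).mulVec (F.mulVec QK) +
            (wordProd A p).mulVec ((A r₀).mulVec (runSum A Cv K ((B:ℝ) * x - (r₀:ℕ))))‖
        ≤ ‖(wordProd A p).mulVec (F.mulVec QK)‖ +
            ‖(wordProd A p).mulVec ((A r₀).mulVec (runSum A Cv K ((B:ℝ) * x - (r₀:ℕ))))‖ :=
          norm_add_le _ _
      _ ≤ c₁ * lam ^ n * (M * g K) + (c₁ * lam ^ ((n+1) + K) * ‖Cv‖ +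
            M * c₁ * ∑ k ∈ Finset.range K, lam ^ ((n+1) + k) * g (K - 1 - k)) :=
          add_le_add hterm1 hterm2
      _ = c₁ * lam ^ (n + (K+1)) * ‖Cv‖ +
            M * c₁ * ∑ k ∈ Finset.range (K+1), lam ^ (n + k) * g (K + 1 - 1 - k) := by
          rw [Finset.sum_range_succ' (fun k => lam ^ (n + k) * g (K + 1 - 1 - k)) K]
          have hs : ∑ k ∈ Finset.range K, lam ^ (n + (k + 1)) * g (K + 1 - 1 - (k + 1))
              = ∑ k ∈ Finset.range K, lam ^ ((n + 1) + k) * g (K - 1 - k) := by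
            refine Finset.sum_congr rfl fun k _ => ?_
            rw [show n + (k + 1) = (n + 1) + k from by omega,
              show K + 1 - 1 - (k + 1) = K - 1 - k from by omega]
          rw [hs, show n + (K + 1) = (n + 1) + K from by omega]
          simp only [Nat.add_zero, Nat.add_sub_cancel, Nat.sub_zero]
          ring
end mainbound

section psi

/-- `Ψ j m = ∑_{i<j} C(m,i) ρ^(m-i)` (with ℕ-subtraction). -/
def Psi (ρ : ℝ) (j m : ℕ) : ℝ := ∑ i ∈ Finset.range j, (m.choose i : ℝ) * ρ ^ (m - i)

lemma Psi_nonneg (ρ : ℝ) (hρ : 0 ≤ ρ) (j m : ℕ) : 0 ≤ Psi ρ j m :=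
  Finset.sum_nonneg fun i _ => by positivity

lemma Psi_zero_right (ρ : ℝ) (j : ℕ) : Psi ρ (j + 1) 0 = 1 := by
  rw [Psi, Finset.sum_range_succ']
  simp [Nat.choose]

lemma Psi_rec (ρ : ℝ) (hρ : 0 ≤ ρ) (j m : ℕ) :
    Psi ρ (j + 1) (m + 1) = ρ * Psi ρ (j + 1) m + Psi ρ j m := by
  have hterm : ∀ i : ℕ, ((m.choose (i + 1) : ℝ)) * (ρ * ρ ^ (m - (i + 1)))
      = (m.choose (i + 1) : ℝ) * ρ ^ (m - i) := by
    intro i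
    rcases le_or_gt (i + 1) m with h | h
    · rw [← pow_succ']
      congr 2
      omega
    · rw [Nat.choose_eq_zero_of_lt h]
      simp
  rw [Psi, Psi, Psi, Finset.sum_range_succ' (fun i => ((m+1).choose i : ℝ) * ρ ^ (m + 1 - i)) j,
    Finset.mul_sum, Finset.sum_range_succ' (fun i => ρ * ((m.choose i : ℝ) * ρ ^ (m - i))) j]
  have h1 : ∀ i : ℕ, ((m + 1).choose (i + 1) : ℝ) * ρ ^ (m + 1 - (i + 1))
      = ρ * ((m.choose (i + 1) : ℝ) * ρ ^ (m - (i + 1))) + (m.choose i : ℝ) * ρ ^ (m - i) := by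
    intro i
    rw [Nat.choose_succ_succ, Nat.succ_sub_succ]
    push_cast
    simp only [Nat.succ_eq_add_one]
    linear_combination (-1 : ℝ) * hterm i
  simp only [h1]
  rw [Finset.sum_add_distrib]
  simp only [Nat.choose_zero_right, Nat.cast_one, one_mul, Nat.sub_zero, Nat.add_sub_cancel]
  ring_nf
end psi

section gev
variable {B d ν : ℕ}

lemma gev_bound (hν : 0 < ν) (A : Fin B → Matrix (Fin d) (Fin d) ℂ)
    (ρ : ℝ) (hρ : 0 ≤ ρ) (ω : ℂ) (hω : ‖ω‖ = 1)
    (V : Fin ν → Fin d → ℂ)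
    (hV0 : (∑ r, A r).mulVec (V ⟨0, hν⟩) = ((ρ : ℂ) * ω) • V ⟨0, hν⟩)
    (hVs : ∀ j : ℕ, ∀ hj : j + 1 < ν,
      (∑ r, A r).mulVec (V ⟨j + 1, hj⟩) =
        ((ρ : ℂ) * ω) • V ⟨j + 1, hj⟩ + V ⟨j, Nat.lt_of_succ_lt hj⟩)
    (hνν : ν - 1 < ν) :
    ∀ m : ℕ, ‖((∑ r, A r) ^ m).mulVec (V ⟨ν - 1, hνν⟩)‖ ≤ (∑ j, ‖V j‖) * Psi ρ ν m := by
  classical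
  set Q := ∑ r, A r with hQdef
  set c₂ : ℝ := ∑ j, ‖V j‖ with hc₂def
  have hc₂n : 0 ≤ c₂ := Finset.sum_nonneg fun j _ => norm_nonneg _
  have hc₂ : ∀ j : Fin ν, ‖V j‖ ≤ c₂ :=
    fun j => Finset.single_le_sum (fun s _ => norm_nonneg (V s)) (Finset.mem_univ j)
  set Vpad : ℕ → (Fin d → ℂ) := fun j =>
    if h : 1 ≤ j ∧ j ≤ ν then V ⟨j - 1, by omega⟩ else 0 with hVpaddef
  have hVpad0 : Vpad 0 = 0 := by simp [hVpaddef]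
  have hVpadnorm : ∀ j, ‖Vpad j‖ ≤ c₂ := by
    intro j
    by_cases h : 1 ≤ j ∧ j ≤ ν
    · rw [hVpaddef]; simp only [dif_pos h]; exact hc₂ _
    · rw [hVpaddef]; simp only [dif_neg h]; simpa using hc₂n
  have hμ : ‖(ρ : ℂ) * ω‖ = ρ := by
    rw [norm_mul, hω, mul_one, Complex.norm_real, Real.norm_eq_abs, abs_of_nonneg hρ]
  have hQact : ∀ j : ℕ, j + 1 ≤ ν →
      Q.mulVec (Vpad (j + 1)) = ((ρ : ℂ) * ω) • Vpad (j + 1) + Vpad j := by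
    intro j hj
    match j with
    | 0 =>
      have h1 : Vpad 1 = V ⟨0, hν⟩ := dif_pos ⟨le_refl 1, hν⟩
      rw [h1, hVpad0, add_zero, hV0]
    | (j' + 1) =>
      have h1 : Vpad (j' + 2) = V ⟨j' + 1, by omega⟩ := dif_pos ⟨by omega, hj⟩
      have h2 : Vpad (j' + 1) = V ⟨j', by omega⟩ := dif_pos ⟨by omega, by omega⟩
      rw [h1, h2]
      exact hVs j' (by omega)
  have main : ∀ m : ℕ, ∀ j : ℕ, j ≤ ν → ‖(Q ^ m).mulVec (Vpad j)‖ ≤ c₂ * Psi ρ j m := by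
    intro m
    induction m with
    | zero =>
      intro j hj
      rw [pow_zero, Matrix.one_mulVec]
      match j with
      | 0 => rw [hVpad0, Psi]; simp
      | (j' + 1) => rw [Psi_zero_right, mul_one]; exact hVpadnorm _
    | succ m ih =>
      intro j hj
      rw [pow_succ, ← Matrix.mulVec_mulVec]
      match j with
      | 0 =>
        rw [hVpad0, Matrix.mulVec_zero, Matrix.mulVec_zero]
        simp [Psi]
      | (j' + 1) =>
        rw [hQact j' hj, Matrix.mulVec_add, Matrix.mulVec_smul]
        calc ‖((ρ:ℂ) * ω) • (Q ^ m).mulVec (Vpad (j' + 1)) + (Q ^ m).mulVec (Vpad j')‖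
            ≤ ‖((ρ:ℂ) * ω) • (Q ^ m).mulVec (Vpad (j' + 1))‖ + ‖(Q ^ m).mulVec (Vpad j')‖ :=
              norm_add_le _ _
          _ = ρ * ‖(Q ^ m).mulVec (Vpad (j' + 1))‖ + ‖(Q ^ m).mulVec (Vpad j')‖ := by
              rw [norm_smul, hμ]
          _ ≤ ρ * (c₂ * Psi ρ (j' + 1) m) + c₂ * Psi ρ j' m := by
              apply add_le_add _ (ih j' (by omega))
              exact mul_le_mul_of_nonneg_left (ih (j' + 1) (by omega)) hρ
          _ = c₂ * Psi ρ (j' + 1) (m + 1) := by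
              rw [Psi_rec ρ hρ j' m]; ring
  intro m
  have hfin : Vpad ν = V ⟨ν - 1, hνν⟩ := dif_pos ⟨hν, le_refl ν⟩
  have h := main m ν (le_refl ν)
  rw [hfin] at h
  exact h
end gev

section regime

lemma pow_sub_le_aux (ρ' : ℝ) (h2 : 0 < ρ') (ν : ℕ) {i m : ℕ} (hi : i < ν) :
    ρ' ^ (m - i) ≤ (max 1 ρ'⁻¹) ^ ν * ρ' ^ m := by
  have hmax1 : (1:ℝ) ≤ max 1 ρ'⁻¹ := le_max_left _ _
  have hne : ρ' ≠ 0 := ne_of_gt h2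
  rcases le_or_gt i m with h | h
  · have heq : ρ' ^ (m - i) = ρ' ^ m * (ρ'⁻¹) ^ i := by
      rw [inv_pow]
      field_simp
      rw [← pow_add]
      congr 1
      omega
    calc ρ' ^ (m - i) = ρ' ^ m * (ρ'⁻¹) ^ i := heq
      _ ≤ ρ' ^ m * (max 1 ρ'⁻¹) ^ ν := by
          apply mul_le_mul_of_nonneg_left _ (by positivity)
          calc (ρ'⁻¹) ^ i ≤ (max 1 ρ'⁻¹) ^ i :=
                pow_le_pow_left₀ (by positivity) (le_max_right _ _) i
            _ ≤ (max 1 ρ'⁻¹) ^ ν := pow_le_pow_right₀ hmax1 hi.le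
      _ = (max 1 ρ'⁻¹) ^ ν * ρ' ^ m := mul_comm _ _
  · rw [Nat.sub_eq_zero_of_le h.le, pow_zero]
    rcases le_or_gt 1 ρ' with h1 | h1
    · nlinarith [one_le_pow₀ hmax1 (n := ν), one_le_pow₀ h1 (n := m)]
    · have hinv : (1:ℝ) ≤ ρ'⁻¹ := by
        have h3 := (one_le_inv₀ h2).mpr h1.le
        exact h3
      rw [max_eq_right hinv]
      calc (1:ℝ) = (ρ'⁻¹ * ρ') ^ m := by rw [inv_mul_cancel₀ hne, one_pow]
        _ = (ρ'⁻¹) ^ m * ρ' ^ m := mul_pow _ _ _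
        _ ≤ (ρ'⁻¹) ^ ν * ρ' ^ m :=
            mul_le_mul_of_nonneg_right (pow_le_pow_right₀ hinv (by omega)) (by positivity)

lemma Psi_le (ρ ρ' : ℝ) (hρ0 : 0 ≤ ρ) (hρρ' : ρ ≤ ρ') (h2 : 0 < ρ') (ν m : ℕ) :
    Psi ρ ν m ≤ (ν : ℝ) * ((max 1 ρ'⁻¹) ^ ν * (((m : ℝ) + 1) ^ (ν - 1) * ρ' ^ m)) := by
  rw [Psi]
  have hterm : ∀ i ∈ Finset.range ν,
      (m.choose i : ℝ) * ρ ^ (m - i)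
        ≤ ((m : ℝ) + 1) ^ (ν - 1) * ((max 1 ρ'⁻¹) ^ ν * ρ' ^ m) := by
    intro i hi
    rw [Finset.mem_range] at hi
    have hchoose : (m.choose i : ℝ) ≤ ((m : ℝ) + 1) ^ (ν - 1) := by
      have h1 : (m.choose i : ℝ) ≤ (m : ℝ) ^ i := by
        have := Nat.choose_le_pow m i
        exact_mod_cast this
      calc (m.choose i : ℝ) ≤ (m : ℝ) ^ i := h1
        _ ≤ ((m : ℝ) + 1) ^ i := pow_le_pow_left₀ (Nat.cast_nonneg m) (by linarith) i
        _ ≤ ((m : ℝ) + 1) ^ (ν - 1) :=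
            pow_le_pow_right₀ (by have := Nat.cast_nonneg (α := ℝ) m; linarith) (by omega)
    have hpow : ρ ^ (m - i) ≤ (max 1 ρ'⁻¹) ^ ν * ρ' ^ m :=
      le_trans (pow_le_pow_left₀ hρ0 hρρ' _) (pow_sub_le_aux ρ' h2 ν hi)
    exact mul_le_mul hchoose hpow (by positivity) (by positivity)
  calc (∑ i ∈ Finset.range ν, (m.choose i : ℝ) * ρ ^ (m - i))
      ≤ ∑ _i ∈ Finset.range ν, ((m : ℝ) + 1) ^ (ν - 1) * ((max 1 ρ'⁻¹) ^ ν * ρ' ^ m) :=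
        Finset.sum_le_sum hterm
    _ = (ν : ℝ) * ((max 1 ρ'⁻¹) ^ ν * (((m : ℝ) + 1) ^ (ν - 1) * ρ' ^ m)) := by
        rw [Finset.sum_const, Finset.card_range, nsmul_eq_mul]
        ring

lemma poly_geom_bounded (k : ℕ) (r : ℝ) (h0 : 0 < r) (h1 : r < 1) :
    ∃ c : ℝ, 0 ≤ c ∧ ∀ m : ℕ, ((m : ℝ) + 1) ^ k * r ^ m ≤ c := by
  have ht : Filter.Tendsto (fun n : ℕ => (n : ℝ) ^ k * r ^ n) atTop (nhds 0) :=
    tendsto_pow_const_mul_const_pow_of_lt_one k h0.le h1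
  obtain ⟨b, hb⟩ := ht.bddAbove_range
  have hb' : ∀ n : ℕ, (n : ℝ) ^ k * r ^ n ≤ b := fun n => hb ⟨n, rfl⟩
  have hb0 : 0 ≤ b := le_trans (by positivity) (hb' 1)
  refine ⟨b / r, by positivity, fun m => ?_⟩
  have := hb' (m + 1)
  rw [le_div_iff₀ h0]
  push_cast at this ⊢
  calc ((m : ℝ) + 1) ^ k * r ^ m * r = ((m : ℝ) + 1) ^ k * r ^ (m + 1) := by ring
    _ ≤ b := this

lemma sum_geom_le (r : ℝ) (h0 : 0 ≤ r) (h1 : r < 1) (K : ℕ) :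
    ∑ j ∈ Finset.range K, r ^ j ≤ (1 - r)⁻¹ := by
  have h1r : (0:ℝ) < 1 - r := by linarith
  have hne : r ≠ 1 := ne_of_lt h1
  calc (∑ j ∈ Finset.range K, r ^ j) = (r ^ K - 1) / (r - 1) := geom_sum_eq hne K
    _ = (1 - r ^ K) / (1 - r) := by rw [← neg_div_neg_eq]; ring_nf
    _ ≤ 1 / (1 - r) := by
        gcongr
        nlinarith [pow_nonneg h0 K]
    _ = (1 - r)⁻¹ := one_div _

end regime

/-- noise, generalized eigenvector case: under (gev) with eigenvalue `ρω`
and height `ν`, and (jsr_λ), the running sums associated with `V^(ν-1)` are `O(λ^K)` if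
`ρ < λ` and `O(K^ν λ^K)` if `ρ = λ`. -/
theorem runSum_noise_jordan (B d ν : ℕ) (hB : 2 ≤ B) (hd : 1 ≤ d) (hν : 0 < ν)
    (A : Fin B → Matrix (Fin d) (Fin d) ℂ)
    (ρ : ℝ) (hρ : 0 ≤ ρ) (ω : ℂ) (hω : ‖ω‖ = 1)
    -- hypothesis (gev)
    (V : Fin ν → Fin d → ℂ) (hind : LinearIndependent ℂ V)
    (hV0 : (∑ r, A r).mulVec (V ⟨0, hν⟩) = ((ρ : ℂ) * ω) • V ⟨0, hν⟩)
    (hVs : ∀ j : ℕ, ∀ hj : j + 1 < ν,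
      (∑ r, A r).mulVec (V ⟨j + 1, hj⟩) =
        ((ρ : ℂ) * ω) • V ⟨j + 1, hj⟩ + V ⟨j, Nat.lt_of_succ_lt hj⟩)
    -- hypothesis (jsr_λ)
    (lam : ℝ) (hlam : 0 < lam)
    (hjsr : ∃ T : ℕ, 1 ≤ T ∧ ∀ w : Fin T → Fin B, ‖wordProd A w‖ ≤ lam ^ T) :
    (ρ < lam →
      (fun K : ℕ => ⨆ x : Set.Icc (0:ℝ) 1, ‖runSum A (V ⟨ν - 1, by omega⟩) K x‖)
        =O[atTop] fun K => lam ^ K) ∧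
    (ρ = lam →
      (fun K : ℕ => ⨆ x : Set.Icc (0:ℝ) 1, ‖runSum A (V ⟨ν - 1, by omega⟩) K x‖)
        =O[atTop] fun K => (K : ℝ) ^ ν * lam ^ K) := by
  classical
  have hB0 : 0 < B := by omega
  obtain ⟨T, hT, hjsrT⟩ := hjsr
  obtain ⟨c₁, hc₁1, hc₁⟩ := jsr_all A hd lam hlam T hT hjsrT
  have hc₁0 : (0:ℝ) ≤ c₁ := by linarith
  set Cv : Fin d → ℂ := V ⟨ν - 1, by omega⟩ with hCv
  set M : ℝ := 1 + ∑ r, ‖A r‖ with hMdef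
  have hM0 : 0 ≤ M := by
    have : (0:ℝ) ≤ ∑ r, ‖A r‖ := Finset.sum_nonneg fun r _ => norm_nonneg _
    rw [hMdef]; linarith
  have hMs : ∀ s : Finset (Fin B), ‖∑ r ∈ s, A r‖ ≤ M := by
    intro s
    calc ‖∑ r ∈ s, A r‖ ≤ ∑ r ∈ s, ‖A r‖ := norm_sum_le _ _
      _ ≤ ∑ r, ‖A r‖ :=
        Finset.sum_le_sum_of_subset_of_nonneg (Finset.subset_univ s) fun r _ _ => norm_nonneg _
      _ ≤ M := by rw [hMdef]; linarith
  set c₂ : ℝ := ∑ j, ‖V j‖ with hc₂def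
  have hc₂0 : 0 ≤ c₂ := Finset.sum_nonneg fun j _ => norm_nonneg _
  have hgev : ∀ m : ℕ, ‖((∑ r, A r) ^ m).mulVec Cv‖ ≤ c₂ * Psi ρ ν m :=
    gev_bound hν A ρ hρ ω hω V hV0 hVs (by omega)
  haveI : Nonempty (Set.Icc (0:ℝ) 1) := ⟨⟨0, by norm_num⟩⟩
  -- generic sup bound
  have supbound : ∀ (g : ℕ → ℝ), (∀ m, 0 ≤ g m) →
      (∀ m, ‖((∑ r, A r) ^ m).mulVec Cv‖ ≤ g m) → ∀ K : ℕ,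
      (⨆ x : Set.Icc (0:ℝ) 1, ‖runSum A Cv K x‖) ≤
        c₁ * lam ^ K * ‖Cv‖ + M * c₁ * (∑ k ∈ Finset.range K, lam ^ k * g (K - 1 - k)) + g K := by
    intro g hgn hg K
    have hsum0 : 0 ≤ ∑ k ∈ Finset.range K, lam ^ k * g (K - 1 - k) :=
      Finset.sum_nonneg fun k _ => mul_nonneg (by positivity) (hgn _)
    apply ciSup_le
    rintro ⟨x, hx⟩
    rw [Set.mem_Icc] at hx
    show ‖runSum A Cv K x‖ ≤ _
    rcases lt_or_eq_of_le hx.2 with hlt | heq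
    · have h := runSum_le_bound A Cv hB0 hd lam c₁ M g hlam hc₁1 hM0 hc₁ hMs hg hgn
        K 0 (fun i => i.elim0) x hx.1 hlt
      rw [wordProd_nil, Matrix.one_mulVec] at h
      simp only [Nat.zero_add] at h
      have : 0 ≤ g K := hgn K
      calc ‖runSum A Cv K x‖ ≤
            c₁ * lam ^ K * ‖Cv‖ + M * c₁ * ∑ k ∈ Finset.range K, lam ^ k * g (K - 1 - k) := h
        _ ≤ _ := by linarith
    · rw [heq, runSum_one A Cv hB0 K]
      have h1 : (0:ℝ) ≤ c₁ * lam ^ K * ‖Cv‖ := by positivity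
      have h2 : (0:ℝ) ≤ M * c₁ * ∑ k ∈ Finset.range K, lam ^ k * g (K - 1 - k) := by positivity
      have := hg K
      linarith
  constructor
  · -- case ρ < lam
    intro hcase
    set ρ' : ℝ := (ρ + lam) / 2 with hρ'def
    have hρ'0 : 0 < ρ' := by rw [hρ'def]; linarith
    have hρρ' : ρ ≤ ρ' := by rw [hρ'def]; linarith
    have hρ'lam : ρ' < lam := by rw [hρ'def]; linarith
    set ρ'' : ℝ := (ρ' + lam) / 2 with hρ''def
    have hρ''0 : 0 < ρ'' := by rw [hρ''def]; linarith
    have hρ'ρ'' : ρ' < ρ'' := by rw [hρ''def]; linarith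
    have hρ''lam : ρ'' < lam := by rw [hρ''def]; linarith
    set c₃ : ℝ := c₂ * ν * (max 1 ρ'⁻¹) ^ ν with hc₃def
    have hc₃0 : 0 ≤ c₃ := by rw [hc₃def]; positivity
    obtain ⟨c₄, hc₄0, hc₄⟩ := poly_geom_bounded (ν - 1) (ρ' / ρ'')
      (by positivity) ((div_lt_one hρ''0).2 hρ'ρ'')
    set c₅ : ℝ := c₃ * c₄ with hc₅def
    have hc₅0 : 0 ≤ c₅ := by rw [hc₅def]; positivity
    have hg : ∀ m, ‖((∑ r, A r) ^ m).mulVec Cv‖ ≤ c₅ * ρ'' ^ m := by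
      intro m
      calc ‖((∑ r, A r) ^ m).mulVec Cv‖ ≤ c₂ * Psi ρ ν m := hgev m
        _ ≤ c₂ * ((ν : ℝ) * ((max 1 ρ'⁻¹) ^ ν * (((m : ℝ) + 1) ^ (ν - 1) * ρ' ^ m))) :=
            mul_le_mul_of_nonneg_left (Psi_le ρ ρ' hρ hρρ' hρ'0 ν m) hc₂0
        _ = c₃ * (((m : ℝ) + 1) ^ (ν - 1) * ρ' ^ m) := by rw [hc₃def]; ring
        _ ≤ c₃ * (c₄ * ρ'' ^ m) := by
            apply mul_le_mul_of_nonneg_left _ hc₃0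
            have h := hc₄ m
            have hexp : ((m : ℝ) + 1) ^ (ν - 1) * (ρ' / ρ'') ^ m ≤ c₄ := h
            rw [div_pow] at hexp
            have hpos : (0:ℝ) < ρ'' ^ m := by positivity
            calc ((m : ℝ) + 1) ^ (ν - 1) * ρ' ^ m
                = (((m : ℝ) + 1) ^ (ν - 1) * (ρ' ^ m / ρ'' ^ m)) * ρ'' ^ m := by
                  field_simp
              _ ≤ c₄ * ρ'' ^ m := mul_le_mul_of_nonneg_right hexp hpos.le
        _ = c₅ * ρ'' ^ m := by rw [hc₅def]; ring
    set g : ℕ → ℝ := fun m => c₅ * ρ'' ^ m with hgdef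
    have hgn : ∀ m, 0 ≤ g m := fun m => by rw [hgdef]; positivity
    set r : ℝ := ρ'' / lam with hrdef
    have hr0 : 0 ≤ r := by rw [hrdef]; positivity
    have hr1 : r < 1 := by rw [hrdef]; exact (div_lt_one hlam).2 hρ''lam
    rw [isBigO_iff]
    refine ⟨c₁ * ‖Cv‖ + M * c₁ * (c₅ * (1 - r)⁻¹ / lam) + c₅, ?_⟩
    rw [eventually_atTop]
    refine ⟨1, fun K hK => ?_⟩
    have hsup := supbound g hgn hg K
    have hsumb : ∑ k ∈ Finset.range K, lam ^ k * g (K - 1 - k)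
        ≤ c₅ * (1 - r)⁻¹ * lam ^ (K - 1) := by
      have hterm : ∀ k ∈ Finset.range K,
          lam ^ k * g (K - 1 - k) = c₅ * lam ^ (K - 1) * r ^ (K - 1 - k) := by
        intro k hk
        rw [Finset.mem_range] at hk
        rw [hgdef, hrdef]
        have hlK : lam ^ (K - 1) = lam ^ k * lam ^ (K - 1 - k) := by
          rw [← pow_add]; congr 1; omega
        rw [div_pow, hlK]
        have : lam ^ (K - 1 - k) ≠ 0 := by positivity
        field_simp
      rw [Finset.sum_congr rfl hterm, ← Finset.mul_sum]
      have hrefl : ∑ k ∈ Finset.range K, r ^ (K - 1 - k) = ∑ k ∈ Finset.range K, r ^ k :=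
        Finset.sum_range_reflect (fun k => r ^ k) K
      rw [hrefl]
      calc c₅ * lam ^ (K - 1) * ∑ k ∈ Finset.range K, r ^ k
          ≤ c₅ * lam ^ (K - 1) * (1 - r)⁻¹ := by
            apply mul_le_mul_of_nonneg_left (sum_geom_le r hr0 hr1 K) (by positivity)
        _ = c₅ * (1 - r)⁻¹ * lam ^ (K - 1) := by ring
    have hgK : g K ≤ c₅ * lam ^ K := by
      rw [hgdef]
      exact mul_le_mul_of_nonneg_left (pow_le_pow_left₀ hρ''0.le hρ''lam.le K) hc₅0
    have hlamK : lam ^ (K - 1) * lam = lam ^ K := by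
      rw [← pow_succ]; congr 1; omega
    have hnorm1 : ‖lam ^ K‖ = lam ^ K := by
      rw [Real.norm_eq_abs, abs_of_nonneg (by positivity)]
    rw [Real.norm_eq_abs, hnorm1, abs_of_nonneg (Real.iSup_nonneg fun x => norm_nonneg _)]
    have h1r : (0:ℝ) < 1 - r := by linarith
    calc (⨆ x : Set.Icc (0:ℝ) 1, ‖runSum A Cv K x‖)
        ≤ c₁ * lam ^ K * ‖Cv‖ + M * c₁ * (∑ k ∈ Finset.range K, lam ^ k * g (K - 1 - k)) + g K :=
          hsup
      _ ≤ c₁ * lam ^ K * ‖Cv‖ + M * c₁ * (c₅ * (1 - r)⁻¹ * lam ^ (K - 1)) + c₅ * lam ^ K := by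
          have := mul_le_mul_of_nonneg_left hsumb (mul_nonneg hM0 hc₁0)
          linarith
      _ = (c₁ * ‖Cv‖ + M * c₁ * (c₅ * (1 - r)⁻¹ / lam) + c₅) * lam ^ K := by
          rw [← hlamK]
          field_simp
  · -- case ρ = lam
    intro hcase
    subst hcase
    set c₃ : ℝ := c₂ * ν * (max 1 ρ⁻¹) ^ ν with hc₃def
    have hc₃0 : 0 ≤ c₃ := by rw [hc₃def]; positivity
    have hρpos : 0 < ρ := hlam
    have hg : ∀ m : ℕ, ‖((∑ r, A r) ^ m).mulVec Cv‖ ≤ c₃ * (((m : ℝ) + 1) ^ (ν - 1) * ρ ^ m) := by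
      intro m
      calc ‖((∑ r, A r) ^ m).mulVec Cv‖ ≤ c₂ * Psi ρ ν m := hgev m
        _ ≤ c₂ * ((ν : ℝ) * ((max 1 ρ⁻¹) ^ ν * (((m : ℝ) + 1) ^ (ν - 1) * ρ ^ m))) :=
            mul_le_mul_of_nonneg_left (Psi_le ρ ρ hρ le_rfl hρpos ν m) hc₂0
        _ = c₃ * (((m : ℝ) + 1) ^ (ν - 1) * ρ ^ m) := by rw [hc₃def]; ring
    set g : ℕ → ℝ := fun m => c₃ * (((m : ℝ) + 1) ^ (ν - 1) * ρ ^ m) with hgdef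
    have hgn : ∀ m, 0 ≤ g m := fun m => by rw [hgdef]; positivity
    rw [isBigO_iff]
    refine ⟨c₁ * ‖Cv‖ + M * c₁ * (c₃ / ρ) + c₃ * 2 ^ ν, ?_⟩
    rw [eventually_atTop]
    refine ⟨1, fun K hK => ?_⟩
    have hK1 : (1:ℝ) ≤ (K:ℝ) := by exact_mod_cast hK
    have hsup := supbound g hgn hg K
    have hsumb : ∑ k ∈ Finset.range K, ρ ^ k * g (K - 1 - k)
        ≤ c₃ * (K:ℝ) ^ ν * ρ ^ (K - 1) := by
      have hterm : ∀ k ∈ Finset.range K,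
          ρ ^ k * g (K - 1 - k) ≤ c₃ * (K:ℝ) ^ (ν - 1) * ρ ^ (K - 1) := by
        intro k hk
        rw [Finset.mem_range] at hk
        rw [hgdef]
        have h1 : ((K - 1 - k : ℕ) : ℝ) + 1 ≤ (K : ℝ) := by
          have : (K - 1 - k) + 1 ≤ K := by omega
          exact_mod_cast this
        have h2 : (((K - 1 - k : ℕ) : ℝ) + 1) ^ (ν - 1) ≤ (K : ℝ) ^ (ν - 1) :=
          pow_le_pow_left₀ (by positivity) h1 _
        have h3 : ρ ^ k * ρ ^ (K - 1 - k) = ρ ^ (K - 1) := by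
          rw [← pow_add]; congr 1; omega
        calc ρ ^ k * (c₃ * ((((K - 1 - k : ℕ) : ℝ) + 1) ^ (ν - 1) * ρ ^ (K - 1 - k)))
            ≤ ρ ^ k * (c₃ * ((K : ℝ) ^ (ν - 1) * ρ ^ (K - 1 - k))) := by
              apply mul_le_mul_of_nonneg_left _ (by positivity)
              apply mul_le_mul_of_nonneg_left _ hc₃0
              exact mul_le_mul_of_nonneg_right h2 (by positivity)
          _ = c₃ * (K : ℝ) ^ (ν - 1) * (ρ ^ k * ρ ^ (K - 1 - k)) := by ring
          _ = c₃ * (K : ℝ) ^ (ν - 1) * ρ ^ (K - 1) := by rw [h3]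
      calc ∑ k ∈ Finset.range K, ρ ^ k * g (K - 1 - k)
          ≤ ∑ _k ∈ Finset.range K, c₃ * (K:ℝ) ^ (ν - 1) * ρ ^ (K - 1) :=
            Finset.sum_le_sum hterm
        _ = (K:ℝ) * (c₃ * (K:ℝ) ^ (ν - 1) * ρ ^ (K - 1)) := by
            rw [Finset.sum_const, Finset.card_range, nsmul_eq_mul]
        _ = c₃ * ((K:ℝ) * (K:ℝ) ^ (ν - 1)) * ρ ^ (K - 1) := by ring
        _ = c₃ * (K:ℝ) ^ ν * ρ ^ (K - 1) := by
            have hKpow : (K:ℝ) * (K:ℝ) ^ (ν - 1) = (K:ℝ) ^ ν := by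
              conv_rhs => rw [show ν = (ν - 1) + 1 from by omega]
              rw [pow_succ']
            rw [hKpow]
    have hgK : g K ≤ c₃ * 2 ^ ν * ((K:ℝ) ^ ν * ρ ^ K) := by
      rw [hgdef]
      have h1 : ((K:ℝ) + 1) ^ (ν - 1) ≤ 2 ^ ν * (K:ℝ) ^ ν := by
        calc ((K:ℝ) + 1) ^ (ν - 1) ≤ (2 * (K:ℝ)) ^ (ν - 1) :=
              pow_le_pow_left₀ (by positivity) (by linarith) _
          _ = 2 ^ (ν - 1) * (K:ℝ) ^ (ν - 1) := mul_pow _ _ _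
          _ ≤ 2 ^ ν * (K:ℝ) ^ ν := by
              apply mul_le_mul (pow_le_pow_right₀ one_le_two (by omega))
                (pow_le_pow_right₀ hK1 (by omega)) (by positivity) (by positivity)
      calc c₃ * (((K:ℝ) + 1) ^ (ν - 1) * ρ ^ K)
          ≤ c₃ * ((2 ^ ν * (K:ℝ) ^ ν) * ρ ^ K) := by
            apply mul_le_mul_of_nonneg_left _ hc₃0
            exact mul_le_mul_of_nonneg_right h1 (by positivity)
        _ = c₃ * 2 ^ ν * ((K:ℝ) ^ ν * ρ ^ K) := by ring
    have hρK : ρ ^ (K - 1) * ρ = ρ ^ K := by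
      rw [← pow_succ]; congr 1; omega
    have hKν1 : (1:ℝ) ≤ (K:ℝ) ^ ν := one_le_pow₀ hK1
    have hnorm1 : ‖(K:ℝ) ^ ν * ρ ^ K‖ = (K:ℝ) ^ ν * ρ ^ K := by
      rw [Real.norm_eq_abs, abs_of_nonneg (by positivity)]
    rw [Real.norm_eq_abs, hnorm1, abs_of_nonneg (Real.iSup_nonneg fun x => norm_nonneg _)]
    calc (⨆ x : Set.Icc (0:ℝ) 1, ‖runSum A Cv K x‖)
        ≤ c₁ * ρ ^ K * ‖Cv‖ + M * c₁ * (∑ k ∈ Finset.range K, ρ ^ k * g (K - 1 - k)) + g K :=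
          hsup
      _ ≤ c₁ * ρ ^ K * ‖Cv‖ + M * c₁ * (c₃ * (K:ℝ) ^ ν * ρ ^ (K - 1))
            + c₃ * 2 ^ ν * ((K:ℝ) ^ ν * ρ ^ K) := by
          have := mul_le_mul_of_nonneg_left hsumb (mul_nonneg hM0 hc₁0)
          linarith
      _ ≤ (c₁ * ‖Cv‖ + M * c₁ * (c₃ / ρ) + c₃ * 2 ^ ν) * ((K:ℝ) ^ ν * ρ ^ K) := by
          have e1 : c₁ * ρ ^ K * ‖Cv‖ ≤ c₁ * ‖Cv‖ * ((K:ℝ) ^ ν * ρ ^ K) := by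
            have : c₁ * ρ ^ K * ‖Cv‖ = (c₁ * ‖Cv‖) * (1 * ρ ^ K) := by ring
            rw [this]
            apply mul_le_mul_of_nonneg_left _ (by positivity)
            exact mul_le_mul_of_nonneg_right hKν1 (by positivity)
          have e2 : M * c₁ * (c₃ * (K:ℝ) ^ ν * ρ ^ (K - 1))
              = M * c₁ * (c₃ / ρ) * ((K:ℝ) ^ ν * ρ ^ K) := by
            rw [← hρK]
            field_simp
          rw [add_mul, add_mul]
          linarith
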